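/- Let k ≥ 1, λ > 0, and let μ_λ be the product on ℝ^k of k copies of the uniform distribution on [−λ, λ]. For any measurable h : ℝ^k → ℝ with 0 ≤ h ≤ 1, define ĥ(x) = ∫ h(x + ε) dμ_λ(ε). Then for all x, y ∈ ℝ^k one has |ĥ(x) − ĥ(y)| ≤ ‖x − y‖₁ / (2λ); in particular ĥ is (2λ)⁻¹-Lipschitz with respect to the ℓ₁ norm on ℝ^k. -/

import Mathlib

open MeasureTheory

/-- The product on `ℝ^k` of `k` copies of the uniform distribution on `[-λ, λ]`. -/
noncomputable def unifPi (k : ℕ) (l : ℝ) : Measure (Fin k → ℝ) :=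
  Measure.pi fun _ => (ENNReal.ofReal (2 * l))⁻¹ • volume.restrict (Set.Icc (-l) l)

/-- Product inequality: `a^n - ∏ (a - t i) ≤ (∑ t i) * a^(n-1)`. -/
lemma prod_lower_bound {k : ℕ} (a : ℝ) (ha : 0 ≤ a) (t : Fin k → ℝ)
    (ht0 : ∀ i, 0 ≤ t i) (ht1 : ∀ i, t i ≤ a) (S : Finset (Fin k)) :
    a ^ S.card - ∏ i ∈ S, (a - t i) ≤ (∑ i ∈ S, t i) * a ^ (S.card - 1) := by
  classical
  induction S using Finset.induction with
  | empty => simp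
  | @insert j S hj ih =>
    have hprod_le : ∏ i ∈ S, (a - t i) ≤ a ^ S.card := by
      rw [← Finset.prod_const]
      exact Finset.prod_le_prod (fun i _ => by linarith [ht0 i, ht1 i])
        (fun i _ => by linarith [ht0 i])
    have hprod_nonneg : 0 ≤ ∏ i ∈ S, (a - t i) :=
      Finset.prod_nonneg fun i _ => by linarith [ht0 i, ht1 i]
    have hsum_nonneg : 0 ≤ ∑ i ∈ S, t i := Finset.sum_nonneg fun i _ => ht0 i
    rw [Finset.card_insert_of_notMem hj, Finset.prod_insert hj, Finset.sum_insert hj]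
    have hkey : a * (a ^ S.card - ∏ i ∈ S, (a - t i)) ≤ (∑ i ∈ S, t i) * a ^ S.card := by
      rcases Nat.eq_zero_or_pos S.card with hc | hc
      · have : S = ∅ := Finset.card_eq_zero.mp hc
        subst this; simp
      · have := mul_le_mul_of_nonneg_left ih ha
        calc a * (a ^ S.card - ∏ i ∈ S, (a - t i))
            ≤ a * ((∑ i ∈ S, t i) * a ^ (S.card - 1)) := this
          _ = (∑ i ∈ S, t i) * (a * a ^ (S.card - 1)) := by ring
          _ = (∑ i ∈ S, t i) * a ^ S.card := by
              rw [← pow_succ']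
              congr 2
              omega
    have h2 : t j * ∏ i ∈ S, (a - t i) ≤ t j * a ^ S.card :=
      mul_le_mul_of_nonneg_left hprod_le (ht0 j)
    have : a ^ (S.card + 1) - (a - t j) * ∏ i ∈ S, (a - t i)
        = a * (a ^ S.card - ∏ i ∈ S, (a - t i)) + t j * ∏ i ∈ S, (a - t i) := by
      ring
    rw [this]
    simp only [Nat.add_sub_cancel]
    calc a * (a ^ S.card - ∏ i ∈ S, (a - t i)) + t j * ∏ i ∈ S, (a - t i)
        ≤ (∑ i ∈ S, t i) * a ^ S.card + t j * a ^ S.card := add_le_add hkey h2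
      _ = (t j + ∑ i ∈ S, t i) * a ^ S.card := by ring

lemma unifPi_eq {k : ℕ} {l : ℝ} (hl : 0 < l) :
    unifPi k l = ((ENNReal.ofReal (2 * l))⁻¹) ^ k •
      volume.restrict (Set.pi Set.univ fun _ : Fin k => Set.Icc (-l) l) := by
  have hIfin : (volume : Measure ℝ) (Set.Icc (-l) l) < ⊤ := by
    rw [Real.volume_Icc]; exact ENNReal.ofReal_lt_top
  haveI : IsFiniteMeasure ((ENNReal.ofReal (2 * l))⁻¹ •
      (volume : Measure ℝ).restrict (Set.Icc (-l) l)) := by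
    constructor
    rw [Measure.smul_apply, Measure.restrict_apply_univ, smul_eq_mul]
    exact ENNReal.mul_lt_top (ENNReal.inv_lt_top.mpr (ENNReal.ofReal_pos.mpr (by linarith))) hIfin
  refine (Measure.pi_eq fun s hs => ?_)
  rw [Measure.smul_apply, Measure.restrict_apply (MeasurableSet.univ_pi hs), smul_eq_mul,
    ← Set.pi_inter_distrib, volume_pi_pi]
  simp only [Measure.smul_apply, Measure.restrict_apply (hs _), smul_eq_mul]
  rw [Finset.prod_mul_distrib, Finset.prod_const, Finset.card_univ, Fintype.card_fin]

/-- The smoothed value equals a normalized box integral. -/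
lemma smoothed_eq {k : ℕ} {l : ℝ} (hl : 0 < l) (h : (Fin k → ℝ) → ℝ)
    (hmeas : Measurable h) (x : Fin k → ℝ) :
    ∫ ε, h (x + ε) ∂(unifPi k l) =
      ((2 * l)⁻¹) ^ k * ∫ t in Set.pi Set.univ (fun i => Set.Icc (x i - l) (x i + l)), h t := by
  have h2l : (0 : ℝ) < 2 * l := by linarith
  set C : Set (Fin k → ℝ) := Set.pi Set.univ fun _ : Fin k => Set.Icc (-l) l with hC
  set A : Set (Fin k → ℝ) := Set.pi Set.univ fun i => Set.Icc (x i - l) (x i + l) with hA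
  have hCm : MeasurableSet C := MeasurableSet.univ_pi fun _ => measurableSet_Icc
  have hAm : MeasurableSet A := MeasurableSet.univ_pi fun _ => measurableSet_Icc
  rw [unifPi_eq hl, integral_smul_measure]
  have hconst : ((((ENNReal.ofReal (2 * l))⁻¹) ^ k : ENNReal)).toReal = ((2 * l)⁻¹) ^ k := by
    rw [ENNReal.toReal_pow, ENNReal.toReal_inv, ENNReal.toReal_ofReal h2l.le]
  rw [hconst]
  have hmemiff : ∀ ε : Fin k → ℝ, ε ∈ C ↔ x + ε ∈ A := by
    intro ε
    simp only [hC, hA, Set.mem_pi, Set.mem_univ, forall_true_left, Set.mem_Icc, Pi.add_apply]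
    constructor
    · intro H i; obtain ⟨h1, h2⟩ := H i; constructor <;> linarith
    · intro H i; obtain ⟨h1, h2⟩ := H i; constructor <;> linarith
  have hind : ∀ ε : Fin k → ℝ,
      C.indicator (fun ε => h (x + ε)) ε = A.indicator h (x + ε) := by
    intro ε
    by_cases hε : ε ∈ C
    · rw [Set.indicator_of_mem hε, Set.indicator_of_mem ((hmemiff ε).mp hε)]
    · rw [Set.indicator_of_notMem hε,
        Set.indicator_of_notMem (fun hc => hε ((hmemiff ε).mpr hc))]
  have : ∫ ε in C, h (x + ε) = ∫ t in A, h t := by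
    rw [← integral_indicator hCm]
    simp_rw [hind]
    rw [integral_add_left_eq_self x (μ := (volume : Measure (Fin k → ℝ)))
        (f := A.indicator h), integral_indicator hAm]
  rw [this, smul_eq_mul]

theorem stmt_2 {k : ℕ} (hk : 1 ≤ k) {l : ℝ} (hl : 0 < l)
    (h : (Fin k → ℝ) → ℝ) (hmeas : Measurable h)
    (h0 : ∀ ψ, 0 ≤ h ψ) (h1 : ∀ ψ, h ψ ≤ 1)
    (x y : Fin k → ℝ) :
    |(∫ ε, h (x + ε) ∂(unifPi k l)) - ∫ ε, h (y + ε) ∂(unifPi k l)| ≤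
      (∑ i, |x i - y i|) / (2 * l) := by
  have h2l : (0 : ℝ) < 2 * l := by linarith
  set A : Set (Fin k → ℝ) := Set.pi Set.univ fun i => Set.Icc (x i - l) (x i + l) with hA
  set B : Set (Fin k → ℝ) := Set.pi Set.univ fun i => Set.Icc (y i - l) (y i + l) with hB
  have hAm : MeasurableSet A := MeasurableSet.univ_pi fun _ => measurableSet_Icc
  have hBm : MeasurableSet B := MeasurableSet.univ_pi fun _ => measurableSet_Icc
  -- volumes
  have hvolA : volume A = ENNReal.ofReal (2 * l) ^ k := by
    rw [hA, volume_pi_pi]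
    simp only [Real.volume_Icc]
    rw [Finset.prod_congr rfl (fun i _ =>
        show ENNReal.ofReal (x i + l - (x i - l)) = ENNReal.ofReal (2 * l) by congr 1; ring),
      Finset.prod_const, Finset.card_univ, Fintype.card_fin]
  have hvolB : volume B = ENNReal.ofReal (2 * l) ^ k := by
    rw [hB, volume_pi_pi]
    simp only [Real.volume_Icc]
    rw [Finset.prod_congr rfl (fun i _ =>
        show ENNReal.ofReal (y i + l - (y i - l)) = ENNReal.ofReal (2 * l) by congr 1; ring),
      Finset.prod_const, Finset.card_univ, Fintype.card_fin]
  have hAfin : volume A < ⊤ := by rw [hvolA]; exact ENNReal.pow_lt_top ENNReal.ofReal_lt_top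
  have hBfin : volume B < ⊤ := by rw [hvolB]; exact ENNReal.pow_lt_top ENNReal.ofReal_lt_top
  -- integrability
  have hintA : IntegrableOn h A volume := by
    refine ⟨hmeas.aestronglyMeasurable.restrict, ?_⟩
    exact HasFiniteIntegral.restrict_of_bounded (C := 1) hAfin
      (Filter.Eventually.of_forall fun t => by
        rw [Real.norm_eq_abs, abs_of_nonneg (h0 t)]; exact h1 t)
  have hintB : IntegrableOn h B volume := by
    refine ⟨hmeas.aestronglyMeasurable.restrict, ?_⟩
    exact HasFiniteIntegral.restrict_of_bounded (C := 1) hBfin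
      (Filter.Eventually.of_forall fun t => by
        rw [Real.norm_eq_abs, abs_of_nonneg (h0 t)]; exact h1 t)
  -- difference of box integrals
  have hdiff : (∫ t in A, h t) - ∫ t in B, h t = (∫ t in A \ B, h t) - ∫ t in B \ A, h t := by
    have e1 : (∫ t in A ∩ B, h t) + ∫ t in A \ B, h t = ∫ t in A, h t :=
      integral_inter_add_diff hBm hintA
    have e2 : (∫ t in B ∩ A, h t) + ∫ t in B \ A, h t = ∫ t in B, h t :=
      integral_inter_add_diff hAm hintB
    rw [Set.inter_comm B A] at e2
    linarith
  -- bound each piece by the volume of the difference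
  have hbound : ∀ (S : Set (Fin k → ℝ)), MeasurableSet S → volume S < ⊤ →
      (0 ≤ ∫ t in S, h t) ∧ (∫ t in S, h t) ≤ (volume S).toReal := by
    intro S hSm hSfin
    constructor
    · exact setIntegral_nonneg hSm fun t _ => h0 t
    · have := norm_setIntegral_le_of_norm_le_const (C := 1) hSfin
        (fun t _ => by rw [Real.norm_eq_abs, abs_of_nonneg (h0 t)]; exact h1 t)
      rw [one_mul] at this
      exact (le_abs_self _).trans this
  have hABfin : volume (A \ B) < ⊤ := (measure_mono Set.diff_subset).trans_lt hAfin
  have hBAfin : volume (B \ A) < ⊤ := (measure_mono Set.diff_subset).trans_lt hBfin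
  obtain ⟨hAB0, hAB1⟩ := hbound (A \ B) (hAm.diff hBm) hABfin
  obtain ⟨hBA0, hBA1⟩ := hbound (B \ A) (hBm.diff hAm) hBAfin
  -- volume of the differences
  have hABinter_fin : volume (A ∩ B) < ⊤ := (measure_mono Set.inter_subset_left).trans_lt hAfin
  have hvdA : (volume (A \ B)).toReal = (volume A).toReal - (volume (A ∩ B)).toReal := by
    have : volume (A \ B) = volume A - volume (A ∩ B) := by
      rw [show A \ B = A \ (A ∩ B) by rw [Set.diff_self_inter]]
      exact measure_diff Set.inter_subset_left (hAm.inter hBm).nullMeasurableSet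
        hABinter_fin.ne
    rw [this, ENNReal.toReal_sub_of_le (measure_mono Set.inter_subset_left) hAfin.ne]
  have hvdB : (volume (B \ A)).toReal = (volume B).toReal - (volume (A ∩ B)).toReal := by
    have : volume (B \ A) = volume B - volume (A ∩ B) := by
      rw [show B \ A = B \ (A ∩ B) by rw [Set.inter_comm, Set.diff_self_inter]]
      exact measure_diff Set.inter_subset_right (hAm.inter hBm).nullMeasurableSet
        hABinter_fin.ne
    rw [this, ENNReal.toReal_sub_of_le (measure_mono Set.inter_subset_right) hBfin.ne]
  -- compute (volume (A ∩ B)).toReal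
  set d : Fin k → ℝ := fun i => |x i - y i| with hd
  set t : Fin k → ℝ := fun i => min (d i) (2 * l) with ht
  have hinterval : (volume (A ∩ B)).toReal = ∏ i, (2 * l - t i) := by
    have : A ∩ B = Set.pi Set.univ fun i =>
        Set.Icc (max (x i - l) (y i - l)) (min (x i + l) (y i + l)) := by
      rw [hA, hB, ← Set.pi_inter_distrib]
      exact congrArg Set.univ.pi (funext fun i => Set.Icc_inter_Icc)
    rw [this, volume_pi_pi]
    simp only [Real.volume_Icc]
    rw [ENNReal.toReal_prod]
    refine Finset.prod_congr rfl fun i _ => ?_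
    have hlen : min (x i + l) (y i + l) - max (x i - l) (y i - l) = 2 * l - d i := by
      rw [min_add_add_right, max_sub_sub_right, hd]
      have h2 := max_sub_min_eq_abs (x i) (y i)
      have h3 := abs_sub_comm (x i) (y i)
      simp only [hd]
      linarith
    rw [hlen]
    rcases le_total (d i) (2 * l) with hle | hle
    · rw [ENNReal.toReal_ofReal (by linarith), ht]
      simp only [min_eq_left hle]
    · have hz : (2 : ℝ) * l - d i ≤ 0 := by linarith
      rw [ENNReal.ofReal_eq_zero.mpr hz, ENNReal.toReal_zero, ht]
      simp only [min_eq_right hle]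
      linarith
  -- volume of A in real
  have hvolAtoReal : (volume A).toReal = (2 * l) ^ k := by
    rw [hvolA, ENNReal.toReal_pow, ENNReal.toReal_ofReal h2l.le]
  have hvolBtoReal : (volume B).toReal = (2 * l) ^ k := by
    rw [hvolB, ENNReal.toReal_pow, ENNReal.toReal_ofReal h2l.le]
  -- bound on the difference of the box integrals
  have hboxdiff : |(∫ s in A, h s) - ∫ s in B, h s| ≤
      (2 * l) ^ k - ∏ i, (2 * l - t i) := by
    rw [hdiff, abs_sub_le_iff]
    constructor
    · have := hAB1
      rw [hvdA, hvolAtoReal, hinterval] at this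
      linarith
    · have := hBA1
      rw [hvdB, hvolBtoReal, hinterval] at this
      linarith
  -- product inequality
  have ht0 : ∀ i, 0 ≤ t i := fun i => le_min (abs_nonneg _) h2l.le
  have ht1 : ∀ i, t i ≤ 2 * l := fun i => min_le_right _ _
  have hprod : (2 * l) ^ k - ∏ i, (2 * l - t i) ≤ (∑ i, t i) * (2 * l) ^ (k - 1) := by
    have := prod_lower_bound (2 * l) h2l.le t ht0 ht1 Finset.univ
    rwa [Finset.card_univ, Fintype.card_fin] at this
  have hsum_le : (∑ i, t i) ≤ ∑ i, d i := Finset.sum_le_sum fun i _ => min_le_left _ _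
  have hsum_nonneg : 0 ≤ ∑ i, t i := Finset.sum_nonneg fun i _ => ht0 i
  -- put it all together
  rw [smoothed_eq hl h hmeas x, smoothed_eq hl h hmeas y, ← hA, ← hB, ← mul_sub, abs_mul,
    abs_of_nonneg (pow_nonneg (inv_nonneg.mpr h2l.le) k)]
  obtain ⟨m, rfl⟩ : ∃ m, k = m + 1 := ⟨k - 1, by omega⟩
  have hcpos : (0 : ℝ) ≤ ((2 * l)⁻¹) ^ (m + 1) := pow_nonneg (inv_nonneg.mpr h2l.le) _
  calc ((2 * l)⁻¹) ^ (m + 1) * |(∫ s in A, h s) - ∫ s in B, h s|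
      ≤ ((2 * l)⁻¹) ^ (m + 1) * ((∑ i, t i) * (2 * l) ^ (m + 1 - 1)) := by
        apply mul_le_mul_of_nonneg_left _ hcpos
        exact hboxdiff.trans hprod
    _ ≤ ((2 * l)⁻¹) ^ (m + 1) * ((∑ i, d i) * (2 * l) ^ (m + 1 - 1)) := by
        apply mul_le_mul_of_nonneg_left _ hcpos
        exact mul_le_mul_of_nonneg_right hsum_le (pow_nonneg h2l.le _)
    _ = (∑ i, d i) / (2 * l) := by
        simp only [Nat.add_sub_cancel]
        have hlne : l ≠ 0 := hl.ne'
        rw [inv_pow, pow_succ]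
        field_simp
    _ = (∑ i, |x i - y i|) / (2 * l) := by rw [hd]
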